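/- Let V be a finite type and E : Fin m → Sym2 V a decodable multigraph on V. Then the map sending each vertex v to the set of edge indices incident with v, i.e. v ↦ {e : Fin m | v ∈ E e}, is injective: distinct vertices are never incident with exactly the same set of edges. -/
import Mathlib


/-- `e` is a loop index at vertex `v`. -/
def IsLoopIdx {V : Type*} {m : ℕ} (E : Fin m → Sym2 V) (v : V) (e : Fin m) : Prop :=
  E e = Sym2.diag v

/-- `u` and `v` are connected in the multigraph `E` with the edge indices in `S` deleted. -/
def ConnectedMod {V : Type*} {m : ℕ} (E : Fin m → Sym2 V) (S : Finset (Fin m))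
    (u v : V) : Prop :=
  Relation.EqvGen (fun a b => ∃ e : Fin m, e ∉ S ∧ E e = s(a, b)) u v

/-- `G − S` is decodable: every vertex is connected in `G − S` to a vertex with a loop
outside `S`. -/
def DecodableMod {V : Type*} {m : ℕ} (E : Fin m → Sym2 V) (S : Finset (Fin m)) : Prop :=
  ∀ u : V, ∃ v : V, (∃ e : Fin m, e ∉ S ∧ IsLoopIdx E v e) ∧ ConnectedMod E S u v

def IsDecodable {V : Type*} {m : ℕ} (E : Fin m → Sym2 V) : Prop :=
  DecodableMod E ∅

/-- `c_x^G`: the number of `x`-element sets of edge indices whose deletion leaves a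
decodable graph. -/
noncomputable def cG {V : Type*} {m : ℕ} (E : Fin m → Sym2 V) (x : ℕ) : ℕ :=
  Set.ncard {S : Finset (Fin m) | S.card = x ∧ DecodableMod E S}

/-- `k_x^G = C(m,x) − c_x^G`. -/
noncomputable def kG {V : Type*} {m : ℕ} (E : Fin m → Sym2 V) (x : ℕ) : ℕ :=
  Nat.choose m x - cG E x

/-- `m(G)`: the minimum cardinality of a loop cut. -/
noncomputable def mCut {V : Type*} {m : ℕ} (E : Fin m → Sym2 V) : ℕ :=
  sInf {k : ℕ | ∃ S : Finset (Fin m), S.card = k ∧ ¬ DecodableMod E S}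

/-- incidence degree of `v` (a loop at `v` counts once). -/
noncomputable def dI {V : Type*} {m : ℕ} (E : Fin m → Sym2 V) (v : V) : ℕ :=
  Set.ncard {e : Fin m | v ∈ E e}

/-- `δ_I(G)`: the minimum incidence degree. -/
noncomputable def deltaI {V : Type*} {m : ℕ} (E : Fin m → Sym2 V) : ℕ :=
  sInf (Set.range (dI E))

/-- `L_G`: the number of loop indices. -/
noncomputable def LG {V : Type*} {m : ℕ} (E : Fin m → Sym2 V) : ℕ :=
  Set.ncard {e : Fin m | ∃ v : V, E e = Sym2.diag v}

/-- `δ_ℓ(v)`: the number of loop indices at `v`. -/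
noncomputable def loopsAt {V : Type*} {m : ℕ} (E : Fin m → Sym2 V) (v : V) : ℕ :=
  Set.ncard {e : Fin m | E e = Sym2.diag v}

/-- `Δ_ℓ(G)`: the maximum number of loops at a single vertex. -/
noncomputable def DeltaLoops {V : Type*} {m : ℕ} (E : Fin m → Sym2 V) : ℕ :=
  sSup (Set.range (loopsAt E))

/-- `κ_G`: the edge connectivity. -/
noncomputable def kappaG {V : Type*} {m : ℕ} (E : Fin m → Sym2 V) : ℕ :=
  sInf {k : ℕ | ∃ S : Finset (Fin m), S.card = k ∧ ∃ u v : V, ¬ ConnectedMod E S u v}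

theorem stmt17 {V : Type*} [Fintype V] {m : ℕ} (E : Fin m → Sym2 V)
    (hdec : IsDecodable E) :
    Function.Injective (fun v : V => {e : Fin m | v ∈ E e}) := by
  intro u v h
  by_contra hne
  have hmem : ∀ e : Fin m, u ∈ E e ↔ v ∈ E e := by
    intro e
    have := Set.ext_iff.mp h e
    simpa using this
  have step : ∀ a b : V, (∃ e : Fin m, E e = s(a, b)) →
      (a = u ∨ a = v) → (b = u ∨ b = v) := by
    rintro a b ⟨e, he⟩ hab
    have ha : a ∈ E e := by rw [he]; exact Sym2.mem_mk_left _ _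
    rcases hab with h1 | h1
    · have hv : v ∈ E e := (hmem e).mp (h1 ▸ ha)
      rw [he, Sym2.mem_iff] at hv
      rcases hv with h2 | h2
      · exact absurd (h2.trans h1).symm hne
      · exact Or.inr h2.symm
    · have hu : u ∈ E e := (hmem e).mpr (h1 ▸ ha)
      rw [he, Sym2.mem_iff] at hu
      rcases hu with h2 | h2
      · exact absurd (h2.trans h1) hne
      · exact Or.inl h2.symm
  obtain ⟨w, ⟨e, -, hloop⟩, hconn⟩ := hdec u
  have hw : w = u ∨ w = v := by
    have key : ∀ a b : V, ConnectedMod E ∅ a b →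
        ((a = u ∨ a = v) ↔ (b = u ∨ b = v)) := by
      intro a b hc
      induction hc with
      | rel x y hxy =>
          obtain ⟨e', -, he'⟩ := hxy
          exact ⟨step x y ⟨e', he'⟩,
            step y x ⟨e', by rw [he', Sym2.eq_swap]⟩⟩
      | refl x => exact Iff.rfl
      | symm x y _ ih => exact ih.symm
      | trans x y z _ _ ih1 ih2 => exact ih1.trans ih2
    exact (key u w hconn).mp (Or.inl rfl)
  have hz : w ∈ E e := by
    rw [hloop, Sym2.diag]; exact Sym2.mem_mk_left _ _
  rcases hw with h1 | h1
  · have hv : v ∈ E e := (hmem e).mp (h1 ▸ hz)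
    rw [hloop, Sym2.diag, Sym2.mem_iff, h1] at hv
    exact hne (hv.elim Eq.symm Eq.symm)
  · have hu : u ∈ E e := (hmem e).mpr (h1 ▸ hz)
    rw [hloop, Sym2.diag, Sym2.mem_iff, h1] at hu
    exact hne (hu.elim id id)
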